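/- There exists N ∈ ℕ such that for all n ≥ N, the function J_n : [r_{n−1}, ∞) → ℝ defined by J_n(r) = a_{n−1}·exp(r^{2^{n−1}}) − a_n·exp(r^{2^n}) + 3·(1+r)^2·2^{−4(n−1)}, where a_m = exp(−(r_m + 3)^{2^m}), satisfies J_n(r_n + 3) > 0 and J_n(r_n + 4) < 0; hence J_n has a zero ρ_n ∈ (r_n + 3, r_n + 4). -/

import Mathlib

open Real

noncomputable def tseq (m : ℕ) : ℝ := 4 * Real.pi * (2 : ℝ) ^ (-(m : ℤ)) * (m + 13 / 6)

noncomputable def rseq (m : ℕ) : ℝ := 128 * m / tseq m + 1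

noncomputable def aseq (m : ℕ) : ℝ := Real.exp (-(rseq m + 3) ^ (2 ^ m))

noncomputable def Jfun (n : ℕ) (r : ℝ) : ℝ :=
  aseq (n - 1) * Real.exp (r ^ (2 ^ (n - 1))) - aseq n * Real.exp (r ^ (2 ^ n)) +
    3 * (1 + r) ^ 2 * (2 : ℝ) ^ (-(4 * ((n : ℤ) - 1)))

lemma rseq_eq (m : ℕ) : rseq m = 32 * m * 2 ^ m / (π * (m + 13 / 6)) + 1 := by
  have h1 : (0:ℝ) < π := Real.pi_pos
  have h2 : (0:ℝ) < (2:ℝ)^m := by positivity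
  have h3 : (0:ℝ) < (m:ℝ) + 13/6 := by positivity
  unfold rseq tseq
  rw [zpow_neg, zpow_natCast]
  field_simp
  ring

lemma rseq_lb (m : ℕ) (hm : 200 ≤ m) : 10 * 2 ^ m < rseq m := by
  have h1 : (0:ℝ) < π := Real.pi_pos
  have h2 : (0:ℝ) < (2:ℝ)^m := by positivity
  have hm' : (200:ℝ) ≤ m := by exact_mod_cast hm
  have h3 : (0:ℝ) < π * ((m:ℝ) + 13/6) := by positivity
  rw [rseq_eq]
  have h5 : 10 * (π * ((m:ℝ) + 13/6)) < 32 * m := by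
    nlinarith [Real.pi_lt_d2, mul_le_mul_of_nonneg_right (le_of_lt Real.pi_lt_d2)
      (by positivity : (0:ℝ) ≤ (m:ℝ))]
  have key : 10 * 2^m * (π * ((m:ℝ) + 13/6)) < 32 * m * 2^m := by
    nlinarith [mul_lt_mul_of_pos_right h5 h2]
  have := (lt_div_iff₀ h3).mpr key
  linarith

lemma rseq_ub (m : ℕ) (hm : 2 ≤ m) : rseq m < 11 * 2 ^ m := by
  have h1 : (0:ℝ) < π := Real.pi_pos
  have h2 : (0:ℝ) < (2:ℝ)^m := by positivity
  have h4 : (4:ℝ) ≤ 2^m := by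
    calc (4:ℝ) = 2^2 := by norm_num
    _ ≤ 2^m := pow_le_pow_right₀ one_le_two hm
  have hm' : (2:ℝ) ≤ m := by exact_mod_cast hm
  have h3 : (0:ℝ) < π * ((m:ℝ) + 13/6) := by positivity
  rw [rseq_eq]
  have hApos : (0:ℝ) < 11 * 2^m - 1 := by nlinarith
  have hA : 3*((m:ℝ)+13/6) < π*((m:ℝ)+13/6) := by nlinarith [Real.pi_gt_three]
  have hB := mul_lt_mul_of_pos_left hA hApos
  have hC : (m:ℝ)*4 ≤ (m:ℝ)*2^m := mul_le_mul_of_nonneg_left h4 (by positivity)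
  have key : 32 * (m:ℝ) * 2^m < (11 * 2^m - 1) * (π * ((m:ℝ) + 13/6)) := by
    nlinarith [hB, hC, h2]
  have := (div_lt_iff₀ h3).mpr key
  linarith

lemma Jfun_cont (n : ℕ) : Continuous (Jfun n) := by
  unfold Jfun
  fun_prop

set_option maxRecDepth 20000 in
set_option maxHeartbeats 1000000 in
theorem stmt_12 :
    ∃ N : ℕ, ∀ n ≥ N,
      Jfun n (rseq n + 3) > 0 ∧ Jfun n (rseq n + 4) < 0 ∧
        ∃ ρ ∈ Set.Ioo (rseq n + 3) (rseq n + 4), Jfun n ρ = 0 := by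
  refine ⟨201, fun n hn => ?_⟩
  obtain ⟨m, rfl⟩ : ∃ m, n = m + 1 := ⟨n - 1, by omega⟩
  have hm : 200 ≤ m := by omega
  have hub_m := rseq_ub m (by omega)
  have hlb_m := rseq_lb m hm
  have hlb_n := rseq_lb (m+1) (by omega)
  have hub_n := rseq_ub (m+1) (by omega)
  have h2m : (0:ℝ) < 2^m := by positivity
  have h2m1 : (512:ℝ) ≤ 2^(m+1) := by
    calc (512:ℝ) = 2^9 := by norm_num
    _ ≤ 2^(m+1) := pow_le_pow_right₀ one_le_two (by omega)
  have hps : (2:ℝ)^(m+1) = 2 * 2^m := by rw [pow_succ]; ring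
  set x := rseq (m+1) + 3 with hxdef
  clear_value x
  have hx2000 : (2000:ℝ) ≤ x := by rw [hxdef]; nlinarith
  have hxm : rseq m + 3 ≤ x := by rw [hxdef]; nlinarith
  have hrm_pos : (0:ℝ) < rseq m + 3 := by nlinarith
  have hxpos : (0:ℝ) < x := by linarith
  have hx1 : (1:ℝ) ≤ x := by linarith
  have hexp4 : (4 * (((m+1:ℕ):ℤ) - 1)) = 4*(m:ℤ) := by push_cast; ring
  have hcpos : (0:ℝ) < (2:ℝ) ^ (-(4 * (m:ℤ))) := zpow_pos (by norm_num) _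
  have hc1 : (2:ℝ) ^ (-(4 * (m:ℤ))) ≤ 1 :=
    zpow_le_one_of_nonpos₀ (by norm_num) (by omega)
  -- Part A
  have hApos : 0 < Jfun (m+1) x := by
    simp only [Jfun, Nat.add_sub_cancel]
    rw [hexp4]
    have hmid : aseq (m+1) * Real.exp (x ^ 2^(m+1)) = 1 := by
      rw [aseq, ← hxdef, ← Real.exp_add]
      ring_nf
      exact Real.exp_zero
    have hfirst : 1 ≤ aseq m * Real.exp (x ^ 2^m) := by
      rw [aseq, ← Real.exp_add, Real.one_le_exp_iff]
      have := pow_le_pow_left₀ hrm_pos.le hxm (2^m)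
      linarith
    have hthird : 0 < 3 * (1+x)^2 * (2:ℝ) ^ (-(4 * (m:ℤ))) :=
      mul_pos (mul_pos (by norm_num) (pow_pos (by linarith) 2)) hcpos
    rw [hmid]
    linarith
  -- Part B
  have hBneg : Jfun (m+1) (x + 1) < 0 := by
    simp only [Jfun, Nat.add_sub_cancel]
    rw [hexp4]
    have hxk_pos : (0:ℝ) < x ^ 2^(m+1) := pow_pos hxpos _
    have hxh_pos : (0:ℝ) < (x+1) ^ 2^m := pow_pos (by linarith) _
    have hber := one_add_mul_le_pow (a := 1/x)
      (by linarith [one_div_pos.mpr hxpos]) (2^(m+1))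
    have hfact : (x+1)^(2^(m+1)) = x^(2^(m+1)) * (1+1/x)^(2^(m+1)) := by
      rw [← mul_pow]
      congr 1
      field_simp
    have hA1 : x^(2^(m+1)) * (1 + ((2^(m+1):ℕ):ℝ)*(1/x)) ≤ (x+1)^(2^(m+1)) := by
      rw [hfact]
      exact mul_le_mul_of_nonneg_left hber hxk_pos.le
    have hKcast : ((2^(m+1):ℕ):ℝ) = (2:ℝ)^(m+1) := by push_cast; ring
    rw [hKcast] at hA1
    have h11 : x - 3 < 11 * 2^(m+1) := by rw [hxdef]; nlinarith
    have hKx : (1:ℝ)/12 ≤ (2:ℝ)^(m+1) / x := by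
      rw [div_le_div_iff₀ (by norm_num) hxpos]
      nlinarith
    have hAlow : x^(2^(m+1)) * (1/12) ≤ (x+1)^(2^(m+1)) - x^(2^(m+1)) := by
      have e1 : x^(2^(m+1)) * (1 + (2:ℝ)^(m+1)*(1/x)) =
          x^(2^(m+1)) + x^(2^(m+1)) * ((2:ℝ)^(m+1)/x) := by ring
      have e2 : x^(2^(m+1)) * (1/12) ≤ x^(2^(m+1)) * ((2:ℝ)^(m+1)/x) :=
        mul_le_mul_of_nonneg_left hKx hxk_pos.le
      linarith [e1 ▸ hA1]
    have he2 : 2 * 2^m = 2^(m+1) := by rw [pow_succ]; ring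
    have hxk_split : (x^2)^(2^m) = x^(2^(m+1)) := by
      rw [← pow_mul, he2]
    have hsq : ((x+1)*(x-1))^(2^m) ≤ (x^2)^(2^m) :=
      pow_le_pow_left₀ (by nlinarith) (by nlinarith) _
    have hsplit2 : ((x+1)*(x-1))^(2^m) = (x+1)^(2^m) * (x-1)^(2^m) := mul_pow _ _ _
    have hxm1 : (x - 1) ≤ (x-1)^(2^m) :=
      le_self_pow₀ (by linarith) (Nat.two_pow_pos m).ne'
    have c1 : (x+1)^(2^m) * (x-1) ≤ (x+1)^(2^m) * (x-1)^(2^m) :=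
      mul_le_mul_of_nonneg_left hxm1 hxh_pos.le
    have c2 : (x+1)^(2^m) * (x-1)^(2^m) ≤ x^(2^(m+1)) := by
      rw [← hsplit2, ← hxk_split]; exact hsq
    have hE1 : (x+1)^(2^m) ≤ x^(2^(m+1)) * (1/24) := by nlinarith
    have hx4le : x^4 ≤ x^(2^(m+1)) :=
      pow_le_pow_right₀ hx1 (by
        calc 4 = 2^2 := by norm_num
        _ ≤ 2^(m+1) := Nat.pow_le_pow_right (by norm_num) (by omega))
    have hxx : (4000000:ℝ) ≤ x^2 := by nlinarith
    have h72 : 72*(x+2)^2 ≤ x^4 := by nlinarith [hxx, sq_nonneg x, hx2000]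
    have hE2 : 3*(x+2)^2 ≤ x^(2^(m+1)) * (1/24) := by nlinarith [h72, hx4le]
    have hone : (1:ℝ) ≤ x^(2^(m+1)) * (1/24) := by nlinarith
    have h2exp : (2:ℝ) ≤ Real.exp (x^(2^(m+1)) * (1/24)) := by
      have h1 := Real.exp_le_exp.mpr hone
      linarith [Real.exp_one_gt_d9]
    have ham : aseq m ≤ 1 := by
      rw [aseq]
      exact Real.exp_le_one_iff.mpr (neg_nonpos.mpr (pow_nonneg hrm_pos.le _))
    have hterm1 : aseq m * Real.exp ((x+1)^(2^m)) ≤ Real.exp (x^(2^(m+1)) * (1/24)) := by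
      calc aseq m * Real.exp ((x+1)^(2^m)) ≤ 1 * Real.exp ((x+1)^(2^m)) :=
            mul_le_mul_of_nonneg_right ham (Real.exp_pos _).le
      _ = Real.exp ((x+1)^(2^m)) := one_mul _
      _ ≤ Real.exp (x^(2^(m+1)) * (1/24)) := Real.exp_le_exp.mpr hE1
    have hterm2 : 3*(1+(x+1))^2 * (2:ℝ)^(-(4 * (m:ℤ))) <
        Real.exp (x^(2^(m+1)) * (1/24)) := by
      have hb1 : 3*(1+(x+1))^2 * (2:ℝ)^(-(4 * (m:ℤ))) ≤ 3*(x+2)^2 := by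
        nlinarith [sq_nonneg (x+2), hc1, hcpos]
      have hb2 : 3*(x+2)^2 < Real.exp (3*(x+2)^2) := by
        nlinarith [Real.add_one_le_exp (3*(x+2)^2)]
      have hb3 : Real.exp (3*(x+2)^2) ≤ Real.exp (x^(2^(m+1)) * (1/24)) :=
        Real.exp_le_exp.mpr hE2
      linarith
    have hmid2 : aseq (m+1) * Real.exp ((x+1) ^ 2^(m+1)) =
        Real.exp ((x+1)^(2^(m+1)) - x^(2^(m+1))) := by
      rw [aseq, ← hxdef, ← Real.exp_add]
      ring_nf
    have hprod : 2 * Real.exp (x^(2^(m+1)) * (1/24)) ≤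
        Real.exp ((x+1)^(2^(m+1)) - x^(2^(m+1))) := by
      have h5 : 2 * Real.exp (x^(2^(m+1)) * (1/24)) ≤
          Real.exp (x^(2^(m+1)) * (1/24)) * Real.exp (x^(2^(m+1)) * (1/24)) :=
        mul_le_mul_of_nonneg_right h2exp (Real.exp_pos _).le
      rw [← Real.exp_add] at h5
      have h6 : Real.exp (x^(2^(m+1)) * (1/24) + x^(2^(m+1)) * (1/24)) ≤
          Real.exp ((x+1)^(2^(m+1)) - x^(2^(m+1))) := by
        apply Real.exp_le_exp.mpr
        linarith
      linarith
    rw [hmid2]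
    linarith
  -- conclusion
  have hx4 : rseq (m+1) + 4 = x + 1 := by rw [hxdef]; ring
  refine ⟨hApos, by rw [hx4]; exact hBneg, ?_⟩
  have hcont := (Jfun_cont (m+1)).continuousOn (s := Set.Icc x (x+1))
  have hsub := intermediate_value_Ioo' (by linarith : x ≤ x + 1) hcont
  obtain ⟨ρ, hρmem, hρ⟩ := hsub ⟨hBneg, hApos⟩
  exact ⟨ρ, by rw [hx4]; exact hρmem, hρ⟩
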